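/- Work in the ring Λ := ℤ[t₁^{±1}, t₂^{±1}] of Laurent polynomials in two variables (equivalently, the group ring ℤ[ℤ²]). Let G₂ be the 2×2 matrix over Λ given by G₂ = [[t₁ − t₁t₂⁻¹ − t₂⁻², −t₁⁻¹t₂⁻⁶ − t₂⁻⁵], [−t₁⁻¹t₂⁻² − t₁ − t₂⁻¹, −t₁⁻²t₂⁻⁶ − t₁⁻¹t₂⁻⁵ − t₂⁻⁴ − t₂⁻³ − t₂⁻² − t₂⁻¹ − 1]]. Then det G₂ = −t₁⁻¹t₂⁻⁶ − t₁ + t₂⁻⁴ + t₂⁻³ + t₂⁻², and for all integers a, b one has det G₂ ≠ t₁^a t₂^b and det G₂ ≠ −t₁^a t₂^b. -/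

import Mathlib

open Matrix

/-- The Laurent polynomial ring `ℤ[t₁^{±1}, t₂^{±1}]`, realized as the group ring `ℤ[ℤ²]`. -/
noncomputable abbrev TwoVarLaurent : Type := AddMonoidAlgebra ℤ (ℤ × ℤ)

/-- The monomial `t₁^a * t₂^b` in `ℤ[t₁^{±1}, t₂^{±1}]`. -/
noncomputable def mono (a b : ℤ) : TwoVarLaurent := AddMonoidAlgebra.single (a, b) 1

lemma mono_mul (a b c d : ℤ) : mono a b * mono c d = mono (a + c) (b + d) := by
  simp [mono, AddMonoidAlgebra.single_mul_single, Prod.mk_add_mk]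

lemma mono_not_det (a b : ℤ)
    (h : -mono (-1) (-6) - mono 1 0 + mono 0 (-4) + mono 0 (-3) + mono 0 (-2) = mono a b) :
    False := by
  have h' : (-Finsupp.single ((-1:ℤ),(-6:ℤ)) (1:ℤ) - Finsupp.single (1,0) 1
      + Finsupp.single (0,-4) 1 + Finsupp.single (0,-3) 1 + Finsupp.single (0,-2) 1
      : (ℤ×ℤ) →₀ ℤ) = Finsupp.single (a,b) 1 := by
    simpa [mono] using congrArg AddMonoidAlgebra.coeff h
  have h4 := DFunLike.congr_fun h' ((0:ℤ), (-4:ℤ))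
  have h3 := DFunLike.congr_fun h' ((0:ℤ), (-3:ℤ))
  simp only [Finsupp.single_apply, Finsupp.add_apply, Finsupp.sub_apply, Finsupp.neg_apply,
    Prod.mk.injEq] at h4 h3
  norm_num at h4 h3
  first | (split_ifs at h4 h3 <;> simp_all) | omega

lemma neg_mono_not_det (a b : ℤ)
    (h : -mono (-1) (-6) - mono 1 0 + mono 0 (-4) + mono 0 (-3) + mono 0 (-2) = -mono a b) :
    False := by
  have h' : (-Finsupp.single ((-1:ℤ),(-6:ℤ)) (1:ℤ) - Finsupp.single (1,0) 1
      + Finsupp.single (0,-4) 1 + Finsupp.single (0,-3) 1 + Finsupp.single (0,-2) 1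
      : (ℤ×ℤ) →₀ ℤ) = -Finsupp.single (a,b) 1 := by
    simpa [mono] using congrArg AddMonoidAlgebra.coeff h
  have h4 := DFunLike.congr_fun h' ((0:ℤ), (-4:ℤ))
  simp only [Finsupp.single_apply, Finsupp.add_apply, Finsupp.sub_apply, Finsupp.neg_apply,
    Prod.mk.injEq] at h4
  norm_num at h4
  split_ifs at h4 <;> simp_all

theorem stmt_12
    (G₂ : Matrix (Fin 2) (Fin 2) TwoVarLaurent)
    (hG₂ : G₂ = !![mono 1 0 - mono 1 (-1) - mono 0 (-2),
                    -mono (-1) (-6) - mono 0 (-5);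
                   -mono (-1) (-2) - mono 1 0 - mono 0 (-1),
                    -mono (-2) (-6) - mono (-1) (-5) - mono 0 (-4) - mono 0 (-3) -
                      mono 0 (-2) - mono 0 (-1) - 1]) :
    G₂.det = -mono (-1) (-6) - mono 1 0 + mono 0 (-4) + mono 0 (-3) + mono 0 (-2) ∧
    ∀ a b : ℤ, G₂.det ≠ mono a b ∧ G₂.det ≠ -mono a b := by
  have hdet : G₂.det = -mono (-1) (-6) - mono 1 0 + mono 0 (-4) + mono 0 (-3) + mono 0 (-2) := by
    rw [hG₂, det_fin_two_of]
    have h1 : (1 : TwoVarLaurent) = mono 0 0 := by simp [mono, AddMonoidAlgebra.one_def]; rfl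
    rw [h1]
    simp only [sub_mul, mul_sub, neg_mul, mul_neg, neg_neg, mono_mul]
    norm_num
    abel
  refine ⟨hdet, fun a b => ⟨fun h => ?_, fun h => ?_⟩⟩
  · exact mono_not_det a b (hdet ▸ h)
  · exact neg_mono_not_det a b (hdet ▸ h)
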